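/- For every α-ω cut S of the associated flow network, setting Q(S) := {t ∈ T : v_t ∈ S} and Q(S̄) := {t ∈ T : v_t ∉ S}, at least one of the following two lower bounds on the capacity holds: c(S) ≥ P − def(Q(S)), or c(S) ≥ P − exc(Q(S̄)). -/
import Mathlib


open Finset

/-- Execution interval of job `j`: the slots between its release time and deadline. -/
def Ei {J : Type} (r dl : J → ℕ) (j : J) : Finset ℕ := Finset.Icc (r j) (dl j)

/-- The time horizon `T = {0, …, d}`, where `d` is the maximal deadline. -/
def Tslots {J : Type} [Fintype J] (dl : J → ℕ) : Finset ℕ :=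
  Finset.Icc 0 (Finset.univ.sup dl)

/-- A schedule assigns to each processor and slot at most one job; it is feasible if
every job `j` is assigned to exactly `p j` processor/slot pairs, all of whose slots lie
in `E j`, and no job is assigned to two different processors at the same slot. -/
def Feasible {J : Type} [Fintype J] [DecidableEq J] (r dl p : J → ℕ) (m : ℕ)
    (S : Fin m → ℕ → Option J) : Prop :=
  (∀ (k : Fin m) (t : ℕ) (j : J), S k t = some j → t ∈ Ei r dl j) ∧
  (∀ j : J, ((Finset.univ ×ˢ Tslots dl).filter
      (fun kt : Fin m × ℕ => S kt.1 kt.2 = some j)).card = p j) ∧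
  (∀ (t : ℕ) (j : J) (k k' : Fin m), S k t = some j → S k' t = some j → k = k')

/-- Number of processors busy at slot `t` in schedule `S`. -/
def volT {J : Type} [DecidableEq J] {m : ℕ} (S : Fin m → ℕ → Option J) (t : ℕ) : ℕ :=
  (Finset.univ.filter (fun k : Fin m => (S k t).isSome)).card

/-- Number of slots of `Q` at which job `j` is scheduled in `S`. -/
def volJ {J : Type} [DecidableEq J] {m : ℕ} (S : Fin m → ℕ → Option J) (j : J)
    (Q : Finset ℕ) : ℕ :=
  (Q.filter (fun t => ∃ k, S k t = some j)).card

/-- Total volume scheduled in `Q` by `S`. -/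
def volQ {J : Type} [Fintype J] [DecidableEq J] {m : ℕ} (S : Fin m → ℕ → Option J)
    (Q : Finset ℕ) : ℕ :=
  ∑ j, volJ S j Q

/-- Forced volume of job `j` in `Q`: `max {0, p j − |E j \ Q|}`. -/
def fvJ {J : Type} (r dl p : J → ℕ) (j : J) (Q : Finset ℕ) : ℕ :=
  p j - (Ei r dl j \ Q).card

/-- Total forced volume in `Q`. -/
def fvQ {J : Type} [Fintype J] (r dl p : J → ℕ) (Q : Finset ℕ) : ℕ :=
  ∑ j, fvJ r dl p j Q

/-- Possible volume of job `j` in `Q`: `min {p j, |E j ∩ Q|}`. -/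
def pvJ {J : Type} (r dl p : J → ℕ) (j : J) (Q : Finset ℕ) : ℕ :=
  min (p j) ((Ei r dl j) ∩ Q).card

/-- Total possible volume in `Q`. -/
def pvQ {J : Type} [Fintype J] (r dl p : J → ℕ) (Q : Finset ℕ) : ℕ :=
  ∑ j, pvJ r dl p j Q

/-- Deficiency of `Q`: forced volume minus available processing capacity. -/
def defQ {J : Type} [Fintype J] (r dl p : J → ℕ) (mb : ℕ → ℕ) (Q : Finset ℕ) : ℤ :=
  (fvQ r dl p Q : ℤ) - ∑ t ∈ Q, (mb t : ℤ)

/-- Excess of `Q`: required processor utilization minus available work. -/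
def excQ {J : Type} [Fintype J] (r dl p : J → ℕ) (lb : ℕ → ℕ) (Q : Finset ℕ) : ℤ :=
  (∑ t ∈ Q, (lb t : ℤ)) - (pvQ r dl p Q : ℤ)

/-- The nodes of the flow network associated with an instance of
deadline-scheduling-with-processor-bounds. -/
inductive Node (J : Type) where
  | alpha : Node J
  | omega : Node J
  | gamma : Node J
  | job : J → Node J
  | slot : ℕ → Node J

/-- The capacity of a cut `S` (given by its indicator function on the nodes): the sum of
the capacities of all edges of the network leaving `S`. -/
def cutCap {J : Type} [Fintype J] (r dl p : J → ℕ) (lb mb : ℕ → ℕ)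
    (S : Node J → Bool) : ℕ :=
  (∑ j, if S Node.alpha = true ∧ S (Node.job j) = false then p j else 0) +
  (∑ j, ∑ t ∈ Tslots dl,
    if S (Node.job j) = true ∧ S (Node.slot t) = false ∧ t ∈ Ei r dl j then 1 else 0) +
  (∑ t ∈ Tslots dl,
    if S (Node.slot t) = true ∧ S Node.gamma = false then mb t - lb t else 0) +
  (∑ t ∈ Tslots dl,
    if S (Node.slot t) = true ∧ S Node.omega = false then lb t else 0) +
  (if S Node.gamma = true ∧ S Node.omega = false then
    ∑ j, p j - ∑ t ∈ Tslots dl, lb t else 0)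

section Aux
variable {J : Type} [Fintype J] [DecidableEq J]

theorem cut_lower_bound' (r dl p : J → ℕ)
    (lb mb : ℕ → ℕ)
    (hlm : ∀ t ∈ Tslots dl, lb t ≤ mb t)
    (hlP : ∑ t ∈ Tslots dl, lb t ≤ ∑ j, p j)
    (S : Node J → Bool) (hα : S Node.alpha = true) (hω : S Node.omega = false) :
    ((∑ j, p j : ℕ) : ℤ) -
        defQ r dl p mb ((Tslots dl).filter (fun t => S (Node.slot t) = true)) ≤
      (cutCap r dl p lb mb S : ℤ) ∨
    ((∑ j, p j : ℕ) : ℤ) -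
        excQ r dl p lb ((Tslots dl).filter (fun t => S (Node.slot t) = false)) ≤
      (cutCap r dl p lb mb S : ℤ) := by
  classical
  have hET : ∀ j, Ei r dl j ⊆ Tslots dl := by
    intro j t ht
    simp only [Ei, Finset.mem_Icc] at ht
    simp only [Tslots, Finset.mem_Icc]
    exact ⟨Nat.zero_le _, ht.2.trans (Finset.le_sup (Finset.mem_univ j))⟩
  -- inner B sums
  have hBj : ∀ j, (∑ t ∈ Tslots dl,
      if S (Node.job j) = true ∧ S (Node.slot t) = false ∧ t ∈ Ei r dl j then 1 else 0)
      = if S (Node.job j) = true then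
          ((Ei r dl j).filter (fun t => S (Node.slot t) = false)).card else 0 := by
    intro j
    by_cases hj : S (Node.job j) = true
    · have hfe : (Tslots dl).filter (fun t => S (Node.slot t) = false ∧ t ∈ Ei r dl j)
           = (Ei r dl j).filter (fun t => S (Node.slot t) = false) := by
        ext t
        simp only [Finset.mem_filter]
        constructor
        · rintro ⟨_, h1, h2⟩; exact ⟨h2, h1⟩
        · rintro ⟨h2, h1⟩; exact ⟨hET j h2, h1, h2⟩
      simp only [hj, true_and, if_true]
      rw [← hfe, Finset.card_filter]
    · simp [hj]
  -- the filtered-intersection identity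
  have hIQ : ∀ j, (Ei r dl j) ∩ ((Tslots dl).filter (fun t => S (Node.slot t) = false))
      = (Ei r dl j).filter (fun t => S (Node.slot t) = false) := by
    intro j
    ext t
    simp only [Finset.mem_inter, Finset.mem_filter]
    constructor
    · rintro ⟨h1, _, h2⟩; exact ⟨h1, h2⟩
    · rintro ⟨h1, h2⟩; exact ⟨h1, hET j h1, h2⟩
  have hSD : ∀ j, (Ei r dl j) \ ((Tslots dl).filter (fun t => S (Node.slot t) = true))
      = (Ei r dl j).filter (fun t => S (Node.slot t) = false) := by
    intro j
    ext t
    simp only [Finset.mem_sdiff, Finset.mem_filter]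
    constructor
    · rintro ⟨h1, h2⟩
      refine ⟨h1, ?_⟩
      by_contra h
      exact h2 ⟨hET j h1, by simpa using h⟩
    · rintro ⟨h1, h2⟩
      exact ⟨h1, fun h => by simp [h.2] at h2⟩
  unfold cutCap
  simp only [hα, hω, true_and, and_true, hBj, Bool.not_eq_true]
  by_cases hγ : S Node.gamma = true
  · -- gamma in S: right disjunct
    right
    simp only [hγ, if_true, Bool.true_eq_false, false_and, if_false, and_false,
      Finset.sum_const_zero]
    have hpv : (pvQ r dl p ((Tslots dl).filter (fun t => S (Node.slot t) = false)) : ℤ) ≤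
        (∑ j, if S (Node.job j) = false then p j else 0 : ℕ) +
        (∑ j, if S (Node.job j) = true then
          ((Ei r dl j).filter (fun t => S (Node.slot t) = false)).card else 0 : ℕ) := by
      unfold pvQ
      push_cast
      rw [← Finset.sum_add_distrib]
      apply Finset.sum_le_sum
      intro j _
      unfold pvJ
      rw [hIQ j]
      by_cases hj : S (Node.job j) = true
      · rw [if_neg (show ¬ S (Node.job j) = false by simp [hj]), if_pos hj]
        push_cast
        have := min_le_right (p j) ((Ei r dl j).filter (fun t => S (Node.slot t) = false)).card
        omega
      · have hj' : S (Node.job j) = false := by simpa using hj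
        rw [if_pos hj', if_neg hj]
        have := min_le_left (p j) ((Ei r dl j).filter (fun t => S (Node.slot t) = false)).card
        push_cast
        omega
    have hsplit := Finset.sum_filter_add_sum_filter_not (Tslots dl)
      (fun t => S (Node.slot t) = true) lb
    have hfe2 : (Tslots dl).filter (fun t => ¬ S (Node.slot t) = true)
        = (Tslots dl).filter (fun t => S (Node.slot t) = false) := by
      apply Finset.filter_congr
      intro t _
      simp
    rw [hfe2] at hsplit
    have hD : (∑ t ∈ Tslots dl, if S (Node.slot t) = true then lb t else 0)
        = ∑ t ∈ (Tslots dl).filter (fun t => S (Node.slot t) = true), lb t := by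
      rw [Finset.sum_filter]
    unfold excQ
    rw [hD]
    push_cast
    have hcast : ((∑ j, p j - ∑ t ∈ Tslots dl, lb t : ℕ) : ℤ)
        = (∑ j, p j : ℕ) - (∑ t ∈ Tslots dl, lb t : ℕ) := by
      omega
    push_cast at hpv hsplit hcast ⊢
    linarith
  · -- gamma not in S: left disjunct
    left
    have hγ' : S Node.gamma = false := by simpa using hγ
    simp only [hγ', Bool.false_eq_true, if_false, Bool.true_eq_false, and_false,
      eq_self_iff_true, and_true, if_true, add_zero]
    have hfv : ((∑ j, p j : ℕ) : ℤ)
        - (fvQ r dl p ((Tslots dl).filter (fun t => S (Node.slot t) = true)) : ℤ) ≤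
        (∑ j, if S (Node.job j) = false then p j else 0 : ℕ) +
        (∑ j, if S (Node.job j) = true then
          ((Ei r dl j).filter (fun t => S (Node.slot t) = false)).card else 0 : ℕ) := by
      unfold fvQ
      push_cast
      rw [← Finset.sum_sub_distrib, ← Finset.sum_add_distrib]
      apply Finset.sum_le_sum
      intro j _
      unfold fvJ
      rw [hSD j]
      by_cases hj : S (Node.job j) = true
      · have : S (Node.job j) = false ↔ False := by simp [hj]
        simp only [hj, this, if_true, if_false]
        push_cast
        omega
      · have hj' : S (Node.job j) = false := by simpa using hj
        simp only [hj, hj', if_true, if_false]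
        push_cast
        omega
    have hCD : ((∑ t ∈ Tslots dl, if S (Node.slot t) = true then mb t - lb t else 0 : ℕ) : ℤ)
        + ((∑ t ∈ Tslots dl, if S (Node.slot t) = true then lb t else 0 : ℕ) : ℤ)
        = ∑ t ∈ (Tslots dl).filter (fun t => S (Node.slot t) = true), (mb t : ℤ) := by
      push_cast
      rw [← Finset.sum_add_distrib, Finset.sum_filter]
      apply Finset.sum_congr rfl
      intro t ht
      by_cases hs : S (Node.slot t) = true
      · simp only [hs, if_true]
        have := hlm t ht
        push_cast
        omega
      · simp [hs]
    unfold defQ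
    push_cast at hfv hCD ⊢
    linarith

end Aux

/-- For every `α`-`ω` cut `S` of the associated flow network, with
`Q(S) = {t ∈ T : v_t ∈ S}` and `Q(S̄) = {t ∈ T : v_t ∉ S}`, at least one of the lower
bounds `c(S) ≥ P − def(Q(S))` and `c(S) ≥ P − exc(Q(S̄))` holds. -/
theorem cut_lower_bound (J : Type) [Fintype J] [DecidableEq J]
    (r dl p : J → ℕ) (hrd : ∀ j, r j ≤ dl j) (hp : ∀ j, p j ≤ dl j - r j + 1)
    (m : ℕ) (hm : 1 ≤ m)
    (lb mb : ℕ → ℕ)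
    (hlm : ∀ t ∈ Tslots dl, lb t ≤ mb t) (hmb : ∀ t ∈ Tslots dl, mb t ≤ m)
    (hlP : ∑ t ∈ Tslots dl, lb t ≤ ∑ j, p j)
    (S : Node J → Bool) (hα : S Node.alpha = true) (hω : S Node.omega = false) :
    ((∑ j, p j : ℕ) : ℤ) -
        defQ r dl p mb ((Tslots dl).filter (fun t => S (Node.slot t) = true)) ≤
      (cutCap r dl p lb mb S : ℤ) ∨
    ((∑ j, p j : ℕ) : ℤ) -
        excQ r dl p lb ((Tslots dl).filter (fun t => S (Node.slot t) = false)) ≤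
      (cutCap r dl p lb mb S : ℤ) := by
  exact cut_lower_bound' r dl p lb mb hlm hlP S hα hω
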